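/- Failure of the elimination property for 1/(q^n + q^k + 1) (Remark 7.3): let f : ℤ² → ℚ(q) be defined by f(n,k) = 1/(q^n + q^k + 1). Then there do not exist polynomials c_{i,j} ∈ ℚ(q)[u], indexed by (i,j) ∈ ℕ² with all but finitely many equal to zero and not all zero, such that Σ_{(i,j)} c_{i,j}(q^n) / (q^{n+j} + q^{k+i} + 1) = 0 for all (n,k) ∈ ℤ². In particular, f does not satisfy the elimination property for the set {M_n, L_k, L_n}, and hence f is not q-holonomic, even though f is 𝒯_2-finite (it satisfies a nontrivial recurrence in each of the two variables separately). -/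

import Mathlib

open scoped BigOperators

noncomputable section

/-- The operator `M^α L^β` acting on functions `ℤ^r → V`:
`(M^α L^β f)(n) = q^(α·n) • f(n + β)`, where `q = X ∈ R = k(q) = RatFunc k`. -/
def shiftZ (k : Type) [Field k] {V : Type} [AddCommGroup V] [Module (RatFunc k) V]
    {r : ℕ} (α β : Fin r → ℕ) (f : (Fin r → ℤ) → V) : (Fin r → ℤ) → V :=
  fun n => ((RatFunc.X : RatFunc k) ^ (∑ i, (α i : ℤ) * n i)) • f (fun i => n i + (β i : ℤ))

/-- The subspace `F_m f` spanned by the `M^α L^β f` with `|α| + |β| ≤ m`. -/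
def FmZ (k : Type) [Field k] {V : Type} [AddCommGroup V] [Module (RatFunc k) V]
    {r : ℕ} (m : ℕ) (f : (Fin r → ℤ) → V) : Submodule (RatFunc k) ((Fin r → ℤ) → V) :=
  Submodule.span (RatFunc k)
    { g | ∃ α β : Fin r → ℕ, (∑ i, α i) + (∑ i, β i) ≤ m ∧ g = shiftZ k α β f }

/-- `f : ℤ^r → V` is q-holonomic if each `F_m f` is finite dimensional over `R = k(q)`
and there is a constant `C` with `dim_R F_m f ≤ C (m+1)^r` for all `m`. -/
def IsQHolonomicZ (k : Type) [Field k] {V : Type} [AddCommGroup V] [Module (RatFunc k) V]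
    {r : ℕ} (f : (Fin r → ℤ) → V) : Prop :=
  (∀ m : ℕ, FiniteDimensional (RatFunc k) (FmZ k m f)) ∧
  ∃ C : ℕ, ∀ m : ℕ, Module.finrank (RatFunc k) (FmZ k m f) ≤ C * (m + 1) ^ r

set_option synthInstance.maxHeartbeats 1000000
set_option maxHeartbeats 1000000

section Aux
open Polynomial


abbrev FF := RatFunc ℚ

lemma pow_X_inj : Function.Injective (fun n : ℕ => (RatFunc.X : FF) ^ n) := by
  intro n m h
  have h' : (algebraMap ℚ[X] FF) (X ^ n) = (algebraMap ℚ[X] FF) (X ^ m) := by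
    simpa [map_pow, RatFunc.algebraMap_X] using h
  have := RatFunc.algebraMap_injective ℚ h'
  have := congrArg natDegree this
  simpa [natDegree_X_pow] using this

lemma three_pow_ne_zero (a b c : ℕ) :
    (RatFunc.X : FF) ^ a + (RatFunc.X : FF) ^ b + (RatFunc.X : FF) ^ c ≠ 0 := by
  have hp : (X ^ a + X ^ b + X ^ c : ℚ[X]) ≠ 0 := by
    intro h
    have := congrArg (fun p => Polynomial.eval 1 p) h
    norm_num at this
  intro h
  apply hp
  apply RatFunc.algebraMap_injective ℚ
  simpa [map_pow, map_add, RatFunc.algebraMap_X] using h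

/-- L1: nonvanishing of the denominators. -/
lemma denom_ne_zero (n K : ℤ) :
    (RatFunc.X : FF) ^ n + (RatFunc.X : FF) ^ K + 1 ≠ 0 := by
  set q : FF := RatFunc.X with hq
  have hqne : q ≠ 0 := RatFunc.X_ne_zero
  set m : ℤ := -(min n (min K 0)) with hm
  have hm0 : 0 ≤ m := by omega
  have hn : 0 ≤ n + m := by omega
  have hK : 0 ≤ K + m := by omega
  have key : q ^ n + q ^ K + 1 = q ^ (-m) * (q ^ (n + m) + q ^ (K + m) + q ^ m) := by
    rw [mul_add, mul_add, ← zpow_add₀ hqne, ← zpow_add₀ hqne, ← zpow_add₀ hqne]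
    ring_nf
    rw [zpow_zero]
    ring
  rw [key]
  apply mul_ne_zero (zpow_ne_zero _ hqne)
  have e1 : q ^ (n + m) = q ^ (n + m).toNat := by
    rw [← zpow_natCast q (n + m).toNat, Int.toNat_of_nonneg hn]
  have e2 : q ^ (K + m) = q ^ (K + m).toNat := by
    rw [← zpow_natCast q (K + m).toNat, Int.toNat_of_nonneg hK]
  have e3 : q ^ m = q ^ m.toNat := by
    rw [← zpow_natCast q m.toNat, Int.toNat_of_nonneg hm0]
  rw [e1, e2, e3]
  exact three_pow_ne_zero _ _ _

set_option maxHeartbeats 1000000 in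
/-- L2: distinctness of sums of two powers. -/
lemma two_pow_ne (a b c d : ℕ) (hba : b < a) (hdc : d < c) (hne : ¬(a = c ∧ b = d)) :
    (RatFunc.X : FF) ^ a + (RatFunc.X : FF) ^ b ≠ (RatFunc.X : FF) ^ c + (RatFunc.X : FF) ^ d := by
  have hp : (X ^ a + X ^ b : ℚ[X]) ≠ X ^ c + X ^ d := by
    intro h
    have hco := fun e => congrArg (fun p => Polynomial.coeff p e) h
    simp only [Polynomial.coeff_add, Polynomial.coeff_X_pow] at hco
    have h1 := hco b
    have h2 := hco a
    rw [if_neg (by omega : ¬ b = a), if_pos rfl] at h1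
    rw [if_pos rfl, if_neg (by omega : ¬ a = b)] at h2
    split_ifs at h1 h2 <;> simp at h1 h2 <;> exact hne ⟨by omega, by omega⟩
  intro h
  apply hp
  apply RatFunc.algebraMap_injective ℚ
  simpa [map_pow, map_add, RatFunc.algebraMap_X] using h

lemma part1 : ¬ ∃ c : (ℕ × ℕ) →₀ Polynomial (RatFunc ℚ),
    c ≠ 0 ∧ ∀ n K : ℤ,
      (c.sum fun p poly => poly.eval ((RatFunc.X : RatFunc ℚ) ^ n) /
        ((RatFunc.X : RatFunc ℚ) ^ (n + (p.2 : ℤ)) +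
          (RatFunc.X : RatFunc ℚ) ^ (K + (p.1 : ℤ)) + 1)) = 0 := by
  rintro ⟨c, hc0, hrel⟩
  set q : FF := RatFunc.X with hqdef
  have hqne : q ≠ 0 := RatFunc.X_ne_zero
  set S := c.support with hS
  have key : ∀ p₀ ∈ S, ∀ n : ℕ, (c p₀).eval (q ^ (n + 1)) = 0 := by
    intro p₀ hp₀ n
    set N := n + 1 with hN
    set a : ℕ × ℕ → FF := fun p => (c p).eval (q ^ N) with ha
    set P : Polynomial FF :=
      ∑ p ∈ S, Polynomial.C (a p) *
        ∏ p' ∈ S.erase p,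
          (Polynomial.C (q ^ (N + p'.2)) + Polynomial.C (q ^ p'.1) * Polynomial.X + 1) with hP
    have hev : ∀ x : FF, P.eval x =
        ∑ p ∈ S, a p * ∏ p' ∈ S.erase p, (q ^ (N + p'.2) + q ^ p'.1 * x + 1) := by
      intro x
      simp [hP, Polynomial.eval_finset_sum, Polynomial.eval_prod]
    have hDne : ∀ (p : ℕ × ℕ) (K : ℕ), q ^ (N + p.2) + q ^ p.1 * q ^ K + 1 ≠ 0 := by
      intro p K
      have h := denom_ne_zero ((N + p.2 : ℕ) : ℤ) ((K + p.1 : ℕ) : ℤ)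
      rw [zpow_natCast, zpow_natCast] at h
      simpa [pow_add, mul_comm] using h
    have hroot : ∀ K : ℕ, P.eval (q ^ K) = 0 := by
      intro K
      have hr := hrel (N : ℤ) (K : ℤ)
      rw [Finsupp.sum] at hr
      have hterm : ∀ p ∈ S, (c p).eval (q ^ ((N : ℕ) : ℤ)) /
          (q ^ (((N : ℕ) : ℤ) + (p.2 : ℤ)) + q ^ (((K : ℕ) : ℤ) + (p.1 : ℤ)) + 1)
          = a p / (q ^ (N + p.2) + q ^ p.1 * q ^ K + 1) := by
        intro p _
        rw [show (((N : ℕ) : ℤ) + (p.2 : ℤ)) = ((N + p.2 : ℕ) : ℤ) by push_cast; ring,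
          show (((K : ℕ) : ℤ) + (p.1 : ℤ)) = ((K + p.1 : ℕ) : ℤ) by push_cast; ring,
          zpow_natCast, zpow_natCast, zpow_natCast]
        simp only [ha, pow_add, mul_comm]
      rw [Finset.sum_congr rfl hterm] at hr
      have step : P.eval (q ^ K) = (∑ p ∈ S, a p / (q ^ (N + p.2) + q ^ p.1 * q ^ K + 1)) *
          ∏ p' ∈ S, (q ^ (N + p'.2) + q ^ p'.1 * q ^ K + 1) := by
        rw [hev, Finset.sum_mul]
        refine Finset.sum_congr rfl fun p hp => ?_
        rw [← Finset.mul_prod_erase S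
          (fun p' => q ^ (N + p'.2) + q ^ p'.1 * q ^ K + 1) hp,
          div_mul_eq_mul_div, mul_div_assoc, mul_div_cancel_left₀ _ (hDne p K)]
      rw [step, hr, zero_mul]
    have hP0 : P = 0 :=
      Polynomial.eq_zero_of_infinite_isRoot _
        (Set.infinite_of_injective_forall_mem pow_X_inj hroot)
    set x₀ : FF := -(q ^ (N + p₀.2) + 1) / q ^ p₀.1 with hx0
    have hx : q ^ p₀.1 * x₀ = -(q ^ (N + p₀.2) + 1) := by
      rw [hx0]; field_simp
    have hvanish : q ^ (N + p₀.2) + q ^ p₀.1 * x₀ + 1 = 0 := by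
      rw [hx]; ring
    have hsum : (∑ p ∈ S, a p * ∏ p' ∈ S.erase p, (q ^ (N + p'.2) + q ^ p'.1 * x₀ + 1)) = 0 := by
      rw [← hev x₀, hP0, Polynomial.eval_zero]
    rw [Finset.sum_eq_single_of_mem p₀ hp₀ (fun p hp hpne => by
      rw [Finset.prod_eq_zero (Finset.mem_erase.mpr ⟨Ne.symm hpne, hp₀⟩) hvanish, mul_zero])] at hsum
    have hfac : ∀ p' ∈ S.erase p₀, q ^ (N + p'.2) + q ^ p'.1 * x₀ + 1 ≠ 0 := by
      intro p' hp' h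
      have hne' : p' ≠ p₀ := (Finset.mem_erase.mp hp').1
      have e' : q ^ p'.1 * x₀ = -(q ^ (N + p'.2) + 1) := by linear_combination h
      have elim : (q ^ (N + p'.2) + 1) * q ^ p₀.1 = (q ^ (N + p₀.2) + 1) * q ^ p'.1 := by
        linear_combination q ^ p₀.1 * e' - q ^ p'.1 * hx
      refine two_pow_ne (N + p'.2 + p₀.1) p₀.1 (N + p₀.2 + p'.1) p'.1 (by omega) (by omega)
        (fun ⟨h1, h2⟩ => hne' (Prod.ext (by omega) (by omega))) ?_
      linear_combination elim
    have hane : a p₀ = 0 := by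
      rcases mul_eq_zero.mp hsum with h | h
      · exact h
      · exact absurd h (Finset.prod_ne_zero_iff.mpr hfac)
    simpa [ha] using hane
  apply hc0
  refine Finsupp.ext fun p => ?_
  by_cases hp : p ∈ S
  · have : c p = 0 :=
      Polynomial.eq_zero_of_infinite_isRoot _
        (Set.infinite_of_injective_forall_mem
          (f := fun n : ℕ => q ^ (n + 1))
          (fun x y hxy => by have := pow_X_inj hxy; omega)
          (fun n => key p hp n))
    simpa using this
  · simpa using Finsupp.notMem_support_iff.mp hp

lemma part2 : ¬ IsQHolonomicZ ℚ (fun p : Fin 2 → ℤ =>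
    ((RatFunc.X : RatFunc ℚ) ^ (p 0) + (RatFunc.X : RatFunc ℚ) ^ (p 1) + 1)⁻¹) := by
  set f : (Fin 2 → ℤ) → FF := fun p =>
    ((RatFunc.X : RatFunc ℚ) ^ (p 0) + (RatFunc.X : RatFunc ℚ) ^ (p 1) + 1)⁻¹ with hf
  rintro ⟨hfd, C, hdim⟩
  set t : ℕ := 16 * C + 1 with ht
  set m : ℕ := 3 * t with hm
  haveI := hfd m
  -- the family
  set ι : Type := Fin t × Fin t × Fin t with hι
  have hmem : ∀ i : ι, shiftZ ℚ ![(i.1 : ℕ), 0] ![(i.2.1 : ℕ), (i.2.2 : ℕ)] f ∈ FmZ ℚ m f := by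
    intro i
    apply Submodule.subset_span
    refine ⟨![(i.1 : ℕ), 0], ![(i.2.1 : ℕ), (i.2.2 : ℕ)], ?_, rfl⟩
    have h1 : (i.1 : ℕ) < t := i.1.isLt
    have h2 : (i.2.1 : ℕ) < t := i.2.1.isLt
    have h3 : (i.2.2 : ℕ) < t := i.2.2.isLt
    simp [Fin.sum_univ_two]
    omega
  set v : ι → ↥(FmZ ℚ m f) := fun i =>
    ⟨shiftZ ℚ ![(i.1 : ℕ), 0] ![(i.2.1 : ℕ), (i.2.2 : ℕ)] f, hmem i⟩ with hv
  have hcard : Fintype.card ι = t ^ 3 := by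
    simp [hι, Fintype.card_prod, Fintype.card_fin]; ring
  have hbig : C * (m + 1) ^ 2 < t ^ 3 := by
    have : m + 1 = 3 * t + 1 := by omega
    rw [this]
    nlinarith [ht]
  have hnli : ¬ LinearIndependent (RatFunc ℚ) v := by
    intro hli
    have h := le_trans hli.fintype_card_le_finrank (hdim m)
    rw [hcard] at h
    omega
  obtain ⟨g, hg0, i₀, hgi₀⟩ := Fintype.not_linearIndependent_iff.mp hnli
  -- push to the ambient space
  have hg0' : (∑ i : ι, g i • (shiftZ ℚ ![(i.1 : ℕ), 0] ![(i.2.1 : ℕ), (i.2.2 : ℕ)] f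
      : (Fin 2 → ℤ) → FF)) = 0 := by
    have h2 := congrArg (Subtype.val) hg0
    rw [Submodule.coe_sum] at h2
    simpa [hv] using h2
  apply part1
  -- build the finsupp
  refine ⟨∑ i : ι, Finsupp.single ((i.2.2 : ℕ), (i.2.1 : ℕ))
      (Polynomial.C (g i) * Polynomial.X ^ (i.1 : ℕ)), ?_, ?_⟩
  · -- nonzero
    intro hzero
    have h1 := congrArg (fun cc => Polynomial.coeff (cc ((i₀.2.2 : ℕ), (i₀.2.1 : ℕ))) (i₀.1 : ℕ)) hzero
    simp only [Finsupp.coe_zero, Pi.zero_apply, Polynomial.coeff_zero] at h1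
    rw [Finsupp.finset_sum_apply] at h1
    rw [Polynomial.finset_sum_coeff] at h1
    rw [Finset.sum_eq_single i₀] at h1
    · simp [Polynomial.coeff_C_mul, Polynomial.coeff_X_pow] at h1
      exact hgi₀ h1
    · intro i _ hne
      rcases eq_or_ne ((i.2.2 : ℕ), (i.2.1 : ℕ)) ((i₀.2.2 : ℕ), (i₀.2.1 : ℕ)) with he | he
      · rw [Finsupp.single_apply, if_pos he]
        rw [Polynomial.coeff_C_mul, Polynomial.coeff_X_pow]
        by_cases hii : (i.1 : ℕ) = (i₀.1 : ℕ)
        · exfalso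
          apply hne
          have e1 : i.1 = i₀.1 := Fin.ext hii
          have e2 : i.2.2 = i₀.2.2 := Fin.ext (congrArg Prod.fst he)
          have e3 : i.2.1 = i₀.2.1 := Fin.ext (congrArg Prod.snd he)
          exact Prod.ext e1 (Prod.ext e3 e2)
        · split_ifs with hflip
          · exact absurd hflip.symm hii
          · exact mul_zero _
      · rw [Finsupp.single_apply, if_neg he, Polynomial.coeff_zero]
    · intro hni₀
      exact absurd (Finset.mem_univ i₀) hni₀
  · -- the relation
    intro n K
    have hsum := congrFun hg0' ![n, K]
    rw [Finset.sum_apply] at hsum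
    simp only [Pi.zero_apply] at hsum
    rw [← Finsupp.sum_finset_sum_index (by intro p; simp)
      (by intro p b₁ b₂; rw [Polynomial.eval_add, add_div])]
    rw [← hsum]
    refine Finset.sum_congr rfl fun i _ => ?_
    rw [Finsupp.sum_single_index (by simp)]
    simp only [Pi.smul_apply, shiftZ, smul_eq_mul]
    rw [Polynomial.eval_mul, Polynomial.eval_C, Polynomial.eval_pow, Polynomial.eval_X]
    have e1 : ((RatFunc.X : RatFunc ℚ) ^ n) ^ (i.1 : ℕ) =
        (RatFunc.X : RatFunc ℚ) ^ (∑ j, ((![(i.1 : ℕ), 0] j : ℕ) : ℤ) * (![n, K] j)) := by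
      rw [← zpow_natCast ((RatFunc.X : RatFunc ℚ) ^ n) (i.1 : ℕ), ← zpow_mul]
      congr 1
      simp [Fin.sum_univ_two]
      ring
    rw [e1]
    have e4 : f (fun j => ![n, K] j + ((![(i.2.1 : ℕ), (i.2.2 : ℕ)] j : ℕ) : ℤ)) =
        ((RatFunc.X : RatFunc ℚ) ^ (n + ((i.2.1 : ℕ) : ℤ)) +
          (RatFunc.X : RatFunc ℚ) ^ (K + ((i.2.2 : ℕ) : ℤ)) + 1)⁻¹ := by
      simp [hf]
    rw [e4, div_eq_mul_inv]
    ring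

end Aux

/-- Remark 7.3: the function `f(n,k) = 1/(q^n + q^k + 1)` does not satisfy the
elimination property for `{M_n, L_k, L_n}`: there is no nonzero finitely supported
family of polynomials `c_{i,j} ∈ ℚ(q)[u]` with
`Σ_{(i,j)} c_{i,j}(q^n) / (q^{n+j} + q^{k+i} + 1) = 0` for all `(n,k) ∈ ℤ²`.
In particular, `f` is not q-holonomic. -/
theorem koutschan_example :
    (¬ ∃ c : (ℕ × ℕ) →₀ Polynomial (RatFunc ℚ),
        c ≠ 0 ∧
        ∀ n K : ℤ,
          (c.sum fun p poly =>
            poly.eval ((RatFunc.X : RatFunc ℚ) ^ n) /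
              ((RatFunc.X : RatFunc ℚ) ^ (n + (p.2 : ℤ)) +
                (RatFunc.X : RatFunc ℚ) ^ (K + (p.1 : ℤ)) + 1)) = 0) ∧
    ¬ IsQHolonomicZ ℚ (fun p : Fin 2 → ℤ =>
        ((RatFunc.X : RatFunc ℚ) ^ (p 0) + (RatFunc.X : RatFunc ℚ) ^ (p 1) + 1)⁻¹) :=
  ⟨part1, part2⟩
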